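/- Let X be a CAT(0) cube complex in which every family of pairwise-crossing hyperplanes is finite, and let v be an n-simplex of the simplicial boundary ∂X each of whose 0-dimensional faces is visible. Then there exists a cubical isometric embedding R → X, where R is the standard tiling of [0,∞)^{n+1} by unit (n+1)-dimensional cubes (isometric with respect to the combinatorial path-metrics on 1-skeleta). -/

import Mathlib

/-!
Combinatorial model of a CAT(0) cube complex via Sageev duality.

`V` is the set of 0-cubes, `H` the set of hyperplanes, and `side h x : Bool`
records which halfspace of the hyperplane `h` contains the 0-cube `x`.
The axioms say exactly that `V` is the set of consistent orientations of the
hyperplanes, each differing from a fixed one on finitely many hyperplanes;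
this is precisely the combinatorial data of (the 0-skeleton of) a CAT(0) cube
complex, together with its hyperplane structure.
-/
structure CCC where
  V : Type
  H : Type
  side : H → V → Bool
  nonempty_V : Nonempty V
  vertex_ext : ∀ x y : V, (∀ h, side h x = side h y) → x = y
  sep_finite : ∀ x y : V, {h : H | side h x ≠ side h y}.Finite
  halfspace_nonempty : ∀ h b, ∃ x, side h x = b
  hyp_inj : ∀ h h' : H, (∀ x, side h x = side h' x) → h = h'
  hyp_inj' : ∀ h h' : H, (∀ x, side h x = !(side h' x)) → h = h'
  realize : ∀ (o : H → Bool) (x : V),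
    (∀ h h', ∃ y, side h y = o h ∧ side h' y = o h') →
    {h : H | o h ≠ side h x}.Finite →
    ∃ y, ∀ h, side h y = o h

namespace CCC

variable (X : CCC)

/-- The combinatorial (1-skeleton) distance between 0-cubes: the number of
separating hyperplanes. -/
noncomputable def dist (x y : X.V) : ℕ := (X.sep_finite x y).toFinset.card

/-- Two 0-cubes are adjacent (joined by a 1-cube) iff exactly one hyperplane
separates them. -/
def Adj (x y : X.V) : Prop :=
  ∃ h, X.side h x ≠ X.side h y ∧ ∀ h', X.side h' x ≠ X.side h' y → h' = h

/-- Two hyperplanes cross iff all four quarter-spaces are nonempty. -/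
def Crosses (h h' : X.H) : Prop :=
  ∀ b b' : Bool, ∃ x, X.side h x = b ∧ X.side h' x = b'

/-- The hyperplane `h'` lies in the halfspace `b` of the hyperplane `h`. -/
def InHalf (h' h : X.H) (b : Bool) : Prop :=
  h' ≠ h ∧ ∃ c : Bool, ∀ x, X.side h x = !b → X.side h' x = c

/-- `h` separates the hyperplanes `h₁` and `h₂`. -/
def SepH (h h₁ h₂ : X.H) : Prop :=
  ∃ b : Bool, X.InHalf h₁ h b ∧ X.InHalf h₂ h (!b)

/-- Two distinct hyperplanes contact iff no third hyperplane separates them. -/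
def Contact (h h' : X.H) : Prop := h ≠ h' ∧ ¬ ∃ h'', X.SepH h'' h h'

/-- A facing triple: three distinct hyperplanes, each having a halfspace
containing the other two. -/
def FacingTriple (h₁ h₂ h₃ : X.H) : Prop :=
  h₁ ≠ h₂ ∧ h₁ ≠ h₃ ∧ h₂ ≠ h₃ ∧
  ∃ b₁ b₂ b₃ : Bool,
    X.InHalf h₂ h₁ b₁ ∧ X.InHalf h₃ h₁ b₁ ∧
    X.InHalf h₁ h₂ b₂ ∧ X.InHalf h₃ h₂ b₂ ∧
    X.InHalf h₁ h₃ b₃ ∧ X.InHalf h₂ h₃ b₃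

/-- A set of hyperplanes is inseparable if every hyperplane separating two of
its members belongs to it. -/
def Inseparable (U : Set X.H) : Prop :=
  ∀ u ∈ U, ∀ u' ∈ U, ∀ h, X.SepH h u u' → h ∈ U

/-- A set of hyperplanes is unidirectional if each member has a halfspace
containing only finitely many members. -/
def Unidirectional (U : Set X.H) : Prop :=
  ∀ u ∈ U, ∃ b : Bool, {h | h ∈ U ∧ X.InHalf h u b}.Finite

def NoFacingTriple (U : Set X.H) : Prop :=
  ∀ h₁ ∈ U, ∀ h₂ ∈ U, ∀ h₃ ∈ U, ¬ X.FacingTriple h₁ h₂ h₃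

/-- A unidirectional boundary set (UBS). -/
def IsUBS (U : Set X.H) : Prop :=
  U.Infinite ∧ X.Inseparable U ∧ X.Unidirectional U ∧ X.NoFacingTriple U

/-- Almost-equivalence: finite symmetric difference. -/
def AlmostEq (U U' : Set X.H) : Prop := (symmDiff U U').Finite

/-- A minimal UBS. -/
def MinUBS (U : Set X.H) : Prop :=
  X.IsUBS U ∧ ∀ U' ⊆ U, X.IsUBS U' → X.AlmostEq U U'

/-- The simplex (= almost-equivalence class of UBSs) represented by `U` is a
face of the simplex represented by `V`. -/
def FaceOf (U V : Set X.H) : Prop :=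
  ∃ U' V', X.IsUBS U' ∧ X.IsUBS V' ∧ X.AlmostEq U U' ∧ X.AlmostEq V V' ∧ U' ⊆ V'

/-- `U` decomposes, up to almost-equivalence, into `k` pairwise disjoint
minimal UBSs; i.e. the class of `U` is a `(k-1)`-simplex of `∂X`. -/
def HasDim (U : Set X.H) (k : ℕ) : Prop :=
  ∃ 𝒰 : Fin k → Set X.H, (∀ i, X.MinUBS (𝒰 i)) ∧
    (∀ i j, i ≠ j → Disjoint (𝒰 i) (𝒰 j)) ∧ X.AlmostEq U (⋃ i, 𝒰 i)

/-- No infinite family of pairwise-crossing hyperplanes. -/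
def NoInfiniteCrossing : Prop :=
  ∀ S : Set X.H, (∀ h ∈ S, ∀ h' ∈ S, h ≠ h' → X.Crosses h h') → S.Finite

def LocallyFinite : Prop := ∀ x : X.V, {y | X.Adj x y}.Finite

/-- A combinatorial geodesic ray (parameterized by its vertices). -/
def IsGeodesicRay (γ : ℕ → X.V) : Prop :=
  ∀ m n : ℕ, m ≤ n → X.dist (γ m) (γ n) = n - m

/-- A bi-infinite combinatorial geodesic. -/
def IsGeodesicLine (α : ℤ → X.V) : Prop :=
  ∀ m n : ℤ, m ≤ n → (X.dist (α m) (α n) : ℤ) = n - m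

/-- A combinatorial geodesic segment of length `n`. -/
def IsGeodSeg (c : ℕ → X.V) (n : ℕ) : Prop :=
  ∀ i j : ℕ, i ≤ j → j ≤ n → X.dist (c i) (c j) = j - i

/-- The set of hyperplanes crossing (dual to the 1-cubes of) the path `γ`. -/
def WSet (γ : ℕ → X.V) : Set X.H :=
  {h | ∃ n : ℕ, X.side h (γ n) ≠ X.side h (γ (n+1))}

/-- The 0-cubes of the carrier `N(h)` of the hyperplane `h`. -/
def carrier (h : X.H) : Set X.V :=
  {x | ∃ y, X.Adj x y ∧ X.side h x ≠ X.side h y}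

/-- An essential hyperplane: each halfspace contains 0-cubes arbitrarily far
from the carrier. -/
def EssentialHyp (h : X.H) : Prop :=
  ∀ b : Bool, ∀ n : ℕ, ∃ x, X.side h x = b ∧ ∀ y ∈ X.carrier h, n ≤ X.dist x y

/-- Combinatorial convexity of a set of 0-cubes (the 0-skeleton of a convex
subcomplex). -/
def IsConvexSet (S : Set X.V) : Prop :=
  ∀ x ∈ S, ∀ y ∈ S, ∀ z, X.dist x z + X.dist z y = X.dist x y → z ∈ S

/-- `x` and `y` are joined by a combinatorial path avoiding `S`. -/
def ReachAvoid (S : Set X.V) (x y : X.V) : Prop :=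
  ∃ (n : ℕ) (c : ℕ → X.V), c 0 = x ∧ c n = y ∧
    (∀ i < n, X.Adj (c i) (c (i+1))) ∧ ∀ i ≤ n, c i ∉ S

/-- No compact (finite) convex subcomplex disconnects `X`. -/
def CompactlyIndecomposable : Prop :=
  ∀ K : Set X.V, K.Finite → X.IsConvexSet K →
    ∀ x y : X.V, x ∉ K → y ∉ K → X.ReachAvoid K x y

/-- `γ` bounds an eighth-flat: some eighth-flat (the subcomplex of the standard
tiling of `[0,∞)²` below the graph of an unbounded nondecreasing function)
embeds isometrically and cubically in `X` with image containing `γ`. -/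
def BoundsEighthFlat (γ : ℕ → X.V) : Prop :=
  ∃ g : ℕ → ℕ, Monotone g ∧ (∀ N : ℕ, ∃ m, N ≤ g m) ∧
    ∃ e : {p : ℕ × ℕ // p.2 ≤ g p.1} → X.V,
      (∀ p q, X.dist (e p) (e q) = Nat.dist p.1.1 q.1.1 + Nat.dist p.1.2 q.1.2) ∧
      ∀ n : ℕ, ∃ p, e p = γ n

/-- An edge-chain in the contact graph. -/
def CChain (c : ℕ → X.H) (n : ℕ) : Prop := ∀ i < n, X.Contact (c i) (c (i+1))

/-- Distance in the contact graph `C(X)` (`⊤` if there is no path). -/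
noncomputable def cdist (h h' : X.H) : ℕ∞ :=
  sInf {e : ℕ∞ | ∃ (n : ℕ) (c : ℕ → X.H), c 0 = h ∧ c n = h' ∧ X.CChain c n ∧ e = n}

/-- An edge-chain in the crossing graph. -/
def XChain (c : ℕ → X.H) (n : ℕ) : Prop := ∀ i < n, X.Crosses (c i) (c (i+1))

/-- Distance in the crossing graph `Δ(X)`. -/
noncomputable def xdist (h h' : X.H) : ℕ∞ :=
  sInf {e : ℕ∞ | ∃ (n : ℕ) (c : ℕ → X.H), c 0 = h ∧ c n = h' ∧ X.XChain c n ∧ e = n}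

/-- Distance in the full subgraph `Λ(γ)` of the contact graph spanned by the
hyperplanes crossing `γ`. -/
noncomputable def ldist (γ : ℕ → X.V) (h h' : X.H) : ℕ∞ :=
  sInf {e : ℕ∞ | ∃ (n : ℕ) (c : ℕ → X.H), c 0 = h ∧ c n = h' ∧
    (∀ i ≤ n, c i ∈ X.WSet γ) ∧ X.CChain c n ∧ e = n}

/-- Two 0-simplices of `∂X` (represented by minimal UBSs) are adjacent in the
1-skeleton of `∂X`. -/
def BAdj (U V : Set X.H) : Prop :=
  X.MinUBS U ∧ X.MinUBS V ∧ ¬ X.AlmostEq U V ∧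
    ∃ W, X.IsUBS W ∧ X.FaceOf U W ∧ X.FaceOf V W

/-- Distance in the 1-skeleton of the simplicial boundary `∂X`, between the
0-simplices represented by the minimal UBSs `U` and `V`. -/
noncomputable def bdist (U V : Set X.H) : ℕ∞ :=
  sInf {e : ℕ∞ | ∃ (n : ℕ) (c : ℕ → Set X.H),
    X.AlmostEq (c 0) U ∧ X.AlmostEq (c n) V ∧ (∀ i ≤ n, X.MinUBS (c i)) ∧
    (∀ i < n, X.BAdj (c i) (c (i+1)) ∨ X.AlmostEq (c i) (c (i+1))) ∧ e = n}

/-- Diameter of the contact graph. -/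
noncomputable def cdiam : ℕ∞ := ⨆ (h : X.H) (h' : X.H), X.cdist h h'

/-- Diameter of the crossing graph. -/
noncomputable def xdiam : ℕ∞ := ⨆ (h : X.H) (h' : X.H), X.xdist h h'

/-- Diameter of the 1-skeleton of the simplicial boundary. -/
noncomputable def bdiam : ℕ∞ :=
  ⨆ (U : Set X.H) (V : Set X.H) (_ : X.MinUBS U) (_ : X.MinUBS V), X.bdist U V

/-- A consistent orientation of the hyperplanes: any two chosen halfspaces
intersect. -/
def Consistent (χ : X.H → Bool) : Prop :=
  ∀ h h', ∃ x, X.side h x = χ h ∧ X.side h' x = χ h'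

/-- The halfspace `b` of `h`, as a set of 0-cubes. -/
def Hs (h : X.H) (b : Bool) : Set X.V := {x | X.side h x = b}

/-- Every simplex of `∂X` is visible, i.e. represented by the set of
hyperplanes crossing some combinatorial geodesic ray. -/
def FullyVisible : Prop :=
  ∀ V, X.IsUBS V → ∃ γ : ℕ → X.V, X.IsGeodesicRay γ ∧ X.AlmostEq (X.WSet γ) V

/-- The halfspace `b` of `h` is shallow: it lies within uniformly bounded
distance of the carrier of `h`. -/
def ShallowHalf (h : X.H) (b : Bool) : Prop :=
  ∃ R : ℕ, ∀ x, X.side h x = b → ∃ y ∈ X.carrier h, X.dist x y ≤ R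

/-- An `r`-avoiding combinatorial path (with respect to the basepoint `x₀`)
of length `n` from `a` to `b`. -/
def AvoidPathLen (x₀ : X.V) (r : ℕ) (a b : X.V) (n : ℕ) : Prop :=
  ∃ c : ℕ → X.V, c 0 = a ∧ c n = b ∧
    (∀ i < n, X.Adj (c i) (c (i+1))) ∧ ∀ i ≤ n, r ≤ X.dist (c i) x₀

/-- Combinatorial geodesic completeness: for every (finite) maximal family of
pairwise-crossing hyperplanes and every choice of halfspaces, the intersection
of the chosen halfspaces contains 0-cubes arbitrarily far from the
intersection of the carriers. -/
def CombGeodComplete : Prop :=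
  ∀ (n : ℕ) (W : Fin n → X.H), Function.Injective W →
    (∀ i j, i ≠ j → X.Crosses (W i) (W j)) →
    (∀ h, ¬ ∀ i, X.Crosses h (W i)) →
    ∀ χ : Fin n → Bool, ∀ R : ℕ,
      ∃ x, (∀ i, X.side (W i) x = χ i) ∧
        ∀ y, (∀ i, y ∈ X.carrier (W i)) → R ≤ X.dist x y

/-- `X` decomposes as a product of two unbounded convex subcomplexes:
equivalently, the hyperplanes split into two parts, each member of one part
crossing each member of the other, both factors being unbounded. -/
def ProductDecomp : Prop :=
  ∃ H₁ H₂ : Set X.H, Disjoint H₁ H₂ ∧ H₁ ∪ H₂ = Set.univ ∧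
    (∀ h₁ ∈ H₁, ∀ h₂ ∈ H₂, X.Crosses h₁ h₂) ∧
    (∀ n : ℕ, ∃ x y : X.V, n ≤ ({h | X.side h x ≠ X.side h y} ∩ H₁).ncard) ∧
    (∀ n : ℕ, ∃ x y : X.V, n ≤ ({h | X.side h x ≠ X.side h y} ∩ H₂).ncard)

/-- `∂X` decomposes as the simplicial join of two disjoint nonempty
subcomplexes: the 0-simplices split into two nonempty parts, any 0-simplex of
one part spanning a 1-simplex with any 0-simplex of the other. -/
def JoinDecomp : Prop :=
  ∃ 𝒜₁ 𝒜₂ : Set (Set X.H),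
    (∀ U ∈ 𝒜₁, X.MinUBS U) ∧ (∀ U ∈ 𝒜₂, X.MinUBS U) ∧
    𝒜₁.Nonempty ∧ 𝒜₂.Nonempty ∧
    (∀ U U', U ∈ 𝒜₁ → X.MinUBS U' → X.AlmostEq U U' → U' ∈ 𝒜₁) ∧
    (∀ U U', U ∈ 𝒜₂ → X.MinUBS U' → X.AlmostEq U U' → U' ∈ 𝒜₂) ∧
    (∀ U, X.MinUBS U → U ∈ 𝒜₁ ∨ U ∈ 𝒜₂) ∧
    (∀ U ∈ 𝒜₁, ∀ V ∈ 𝒜₂, ¬ X.AlmostEq U V) ∧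
    (∀ U ∈ 𝒜₁, ∀ V ∈ 𝒜₂, ∃ W, X.IsUBS W ∧ X.FaceOf U W ∧ X.FaceOf V W)

/-! Relative versions of the hyperplane notions, for a (convex) subcomplex
with 0-cube set `S`; the hyperplanes of the subcomplex are the hyperplanes of
`X` crossing it. -/

/-- `h` crosses the subcomplex with 0-cubes `S`. -/
def CrossesSet (S : Set X.V) (h : X.H) : Prop :=
  ∃ x ∈ S, ∃ y ∈ S, X.side h x ≠ X.side h y

def InHalfOn (S : Set X.V) (h' h : X.H) (b : Bool) : Prop :=
  h' ≠ h ∧ ∃ c : Bool, ∀ x ∈ S, X.side h x = !b → X.side h' x = c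

def SepHOn (S : Set X.V) (h h₁ h₂ : X.H) : Prop :=
  X.CrossesSet S h ∧ ∃ b : Bool, X.InHalfOn S h₁ h b ∧ X.InHalfOn S h₂ h (!b)

def InseparableOn (S : Set X.V) (U : Set X.H) : Prop :=
  ∀ u ∈ U, ∀ u' ∈ U, ∀ h, X.SepHOn S h u u' → h ∈ U

def UnidirectionalOn (S : Set X.V) (U : Set X.H) : Prop :=
  ∀ u ∈ U, ∃ b : Bool, {h | h ∈ U ∧ X.InHalfOn S h u b}.Finite

def NoFacingTripleOn (S : Set X.V) (U : Set X.H) : Prop :=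
  ∀ h₁ ∈ U, ∀ h₂ ∈ U, ∀ h₃ ∈ U, ¬ (h₁ ≠ h₂ ∧ h₁ ≠ h₃ ∧ h₂ ≠ h₃ ∧
    ∃ b₁ b₂ b₃ : Bool,
      X.InHalfOn S h₂ h₁ b₁ ∧ X.InHalfOn S h₃ h₁ b₁ ∧
      X.InHalfOn S h₁ h₂ b₂ ∧ X.InHalfOn S h₃ h₂ b₂ ∧
      X.InHalfOn S h₁ h₃ b₃ ∧ X.InHalfOn S h₂ h₃ b₃)

/-- A UBS of the subcomplex with 0-cube set `S`. -/
def IsUBSOn (S : Set X.V) (U : Set X.H) : Prop :=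
  (∀ h ∈ U, X.CrossesSet S h) ∧ U.Infinite ∧ X.InseparableOn S U ∧
    X.UnidirectionalOn S U ∧ X.NoFacingTripleOn S U

def MinUBSOn (S : Set X.V) (U : Set X.H) : Prop :=
  X.IsUBSOn S U ∧ ∀ U' ⊆ U, X.IsUBSOn S U' → X.AlmostEq U U'

def FaceOfOn (S : Set X.V) (U V : Set X.H) : Prop :=
  ∃ U' V', X.IsUBSOn S U' ∧ X.IsUBSOn S V' ∧ X.AlmostEq U U' ∧ X.AlmostEq V V' ∧ U' ⊆ V'

def HasDimOn (S : Set X.V) (U : Set X.H) (k : ℕ) : Prop :=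
  ∃ 𝒰 : Fin k → Set X.H, (∀ i, X.MinUBSOn S (𝒰 i)) ∧
    (∀ i j, i ≠ j → Disjoint (𝒰 i) (𝒰 j)) ∧ X.AlmostEq U (⋃ i, 𝒰 i)

end CCC


/-! ### Auxiliary development -/

namespace CCCOrth

open Classical Set

variable {X : CCC}

/-- The set of hyperplanes separating two 0-cubes. -/
def sepSet (X : CCC) (x y : X.V) : Set X.H := {h : X.H | X.side h x ≠ X.side h y}

lemma dist_eq_card (x y : X.V) (F : Finset X.H)
    (hF : ∀ h, h ∈ F ↔ X.side h x ≠ X.side h y) : X.dist x y = F.card := by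
  unfold CCC.dist
  congr 1
  ext h
  simp [Set.Finite.mem_toFinset, hF]

section Ray

variable (γ : ℕ → X.V)

lemma ray_dist_one (hγ : X.IsGeodesicRay γ) (m : ℕ) : X.dist (γ m) (γ (m + 1)) = 1 := by
  have := hγ m (m + 1) (Nat.le_succ m)
  omega

lemma ray_sep_card_one (hγ : X.IsGeodesicRay γ) (m : ℕ) :
    (X.sep_finite (γ m) (γ (m + 1))).toFinset.card = 1 := by
  have h := ray_dist_one γ hγ m
  unfold CCC.dist at h
  exact h

/-- The hyperplane crossed by the `m`-th edge of the geodesic ray `γ`. -/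
noncomputable def rayH (hγ : X.IsGeodesicRay γ) (m : ℕ) : X.H :=
  (Finset.card_eq_one.mp (ray_sep_card_one γ hγ m)).choose

lemma rayH_spec (hγ : X.IsGeodesicRay γ) (m : ℕ) (g : X.H) :
    X.side g (γ m) ≠ X.side g (γ (m + 1)) ↔ g = rayH γ hγ m := by
  have h2 := (Finset.card_eq_one.mp (ray_sep_card_one γ hγ m)).choose_spec
  constructor
  · intro hg
    have : g ∈ (X.sep_finite (γ m) (γ (m + 1))).toFinset := by
      simp only [Set.Finite.mem_toFinset]; exact hg
    rw [h2] at this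
    simpa [rayH] using this
  · intro hg
    subst hg
    have : rayH γ hγ m ∈ (X.sep_finite (γ m) (γ (m + 1))).toFinset := by
      rw [h2]; simp [rayH]
    simpa [Set.Finite.mem_toFinset] using this

lemma ray_flip_exists (hγ : X.IsGeodesicRay γ) (g : X.H) (t : ℕ)
    (hg : X.side g (γ 0) ≠ X.side g (γ t)) :
    ∃ s < t, g = rayH γ hγ s := by
  induction t with
  | zero => exact absurd rfl hg
  | succ t ih =>
    by_cases h : X.side g (γ 0) = X.side g (γ t)
    · refine ⟨t, Nat.lt_succ_self t, (rayH_spec γ hγ t g).mp ?_⟩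
      intro hc; exact hg (h.trans hc)
    · obtain ⟨s, hs, hgs⟩ := ih h
      exact ⟨s, hs.trans (Nat.lt_succ_self t), hgs⟩

lemma ray_sep_eq (hγ : X.IsGeodesicRay γ) (t : ℕ) :
    (X.sep_finite (γ 0) (γ t)).toFinset = (Finset.range t).image (rayH γ hγ) ∧
      Set.InjOn (rayH γ hγ) (Set.Iio t) := by
  have hsub : (X.sep_finite (γ 0) (γ t)).toFinset ⊆ (Finset.range t).image (rayH γ hγ) := by
    intro g hg
    rw [Set.Finite.mem_toFinset] at hg
    obtain ⟨s, hs, rfl⟩ := ray_flip_exists γ hγ g t hg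
    exact Finset.mem_image.mpr ⟨s, Finset.mem_range.mpr hs, rfl⟩
  have hcard : (X.sep_finite (γ 0) (γ t)).toFinset.card = t := by
    have h := hγ 0 t (Nat.zero_le t)
    unfold CCC.dist at h
    omega
  have hcard2 : ((Finset.range t).image (rayH γ hγ)).card ≤ t := by
    calc ((Finset.range t).image (rayH γ hγ)).card ≤ (Finset.range t).card :=
          Finset.card_image_le
      _ = t := Finset.card_range t
  have heq : (X.sep_finite (γ 0) (γ t)).toFinset = (Finset.range t).image (rayH γ hγ) := by
    apply Finset.eq_of_subset_of_card_le hsub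
    omega
  refine ⟨heq, ?_⟩
  have hinj : ((Finset.range t).image (rayH γ hγ)).card = t := by rw [← heq, hcard]
  have := Finset.injOn_of_card_image_eq (f := rayH γ hγ) (s := Finset.range t)
    (by rw [hinj, Finset.card_range])
  intro a ha b hb hab
  exact this (by simpa using ha) (by simpa using hb) hab

lemma rayH_inj (hγ : X.IsGeodesicRay γ) : Function.Injective (rayH γ hγ) := by
  intro a b hab
  have := (ray_sep_eq γ hγ (max a b + 1)).2
  exact this (by simp only [Set.mem_Iio]; omega) (by simp only [Set.mem_Iio]; omega) hab

lemma rayH_mem_sep (hγ : X.IsGeodesicRay γ) {m t : ℕ} (h : m < t) :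
    X.side (rayH γ hγ m) (γ 0) ≠ X.side (rayH γ hγ m) (γ t) := by
  have heq := (ray_sep_eq γ hγ t).1
  have : rayH γ hγ m ∈ (X.sep_finite (γ 0) (γ t)).toFinset := by
    rw [heq]
    exact Finset.mem_image.mpr ⟨m, Finset.mem_range.mpr h, rfl⟩
  simpa [Set.Finite.mem_toFinset] using this

lemma rayH_not_mem_sep (hγ : X.IsGeodesicRay γ) {m t : ℕ} (h : t ≤ m) :
    X.side (rayH γ hγ m) (γ t) = X.side (rayH γ hγ m) (γ 0) := by
  by_contra hc
  obtain ⟨s, hs, hgs⟩ := ray_flip_exists γ hγ _ t (fun h' => hc h'.symm)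
  have := rayH_inj γ hγ hgs.symm
  omega

/-- Side of the `m`-th hyperplane along the ray. -/
lemma ray_side (hγ : X.IsGeodesicRay γ) (m t : ℕ) :
    X.side (rayH γ hγ m) (γ t)
      = if t ≤ m then X.side (rayH γ hγ m) (γ 0) else !X.side (rayH γ hγ m) (γ 0) := by
  split
  · next h => exact rayH_not_mem_sep γ hγ h
  · next h =>
    have := rayH_mem_sep γ hγ (show m < t by omega)
    cases hb : X.side (rayH γ hγ m) (γ t) <;>
      cases hb' : X.side (rayH γ hγ m) (γ 0) <;> simp_all

lemma ray_const (hγ : X.IsGeodesicRay γ) (g : X.H) (hg : ∀ m, g ≠ rayH γ hγ m) (t : ℕ) :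
    X.side g (γ t) = X.side g (γ 0) := by
  by_contra hc
  obtain ⟨s, _, hgs⟩ := ray_flip_exists γ hγ g t (fun h' => hc h'.symm)
  exact hg s hgs

lemma mem_WSet_iff (hγ : X.IsGeodesicRay γ) (g : X.H) :
    g ∈ X.WSet γ ↔ ∃ m, g = rayH γ hγ m := by
  constructor
  · rintro ⟨m, hm⟩
    exact ⟨m, (rayH_spec γ hγ m g).mp hm⟩
  · rintro ⟨m, rfl⟩
    refine ⟨m, ?_⟩
    exact (rayH_spec γ hγ m _).mpr rfl

end Ray

lemma crosses_symm {g g' : X.H} (h : X.Crosses g g') : X.Crosses g' g :=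
  fun b b' => (h b' b).imp (fun _ ⟨u, v⟩ => ⟨v, u⟩)

lemma bool_ne_iff {a b : Bool} : a ≠ b ↔ a = !b := by cases a <;> cases b <;> simp

/-- Classification of a non-crossing pair of hyperplanes dual to two rays:
either one of them separates the two basepoints, or they "face" each other
(the two far halfspaces are disjoint). -/
lemma two_ray_class (γ γ' : ℕ → X.V) (hγ : X.IsGeodesicRay γ) (hγ' : X.IsGeodesicRay γ')
    (m k : ℕ)
    (hgW : ∀ s, rayH γ hγ m ≠ rayH γ' hγ' s)
    (hg'W : ∀ s, rayH γ' hγ' k ≠ rayH γ hγ s)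
    (hc : ¬ X.Crosses (rayH γ hγ m) (rayH γ' hγ' k)) :
    X.side (rayH γ hγ m) (γ' 0) ≠ X.side (rayH γ hγ m) (γ 0)
    ∨ X.side (rayH γ' hγ' k) (γ 0) ≠ X.side (rayH γ' hγ' k) (γ' 0)
    ∨ ∀ x, ¬(X.side (rayH γ hγ m) x ≠ X.side (rayH γ hγ m) (γ 0)
        ∧ X.side (rayH γ' hγ' k) x ≠ X.side (rayH γ' hγ' k) (γ' 0)) := by
  set g := rayH γ hγ m with hg
  set g' := rayH γ' hγ' k with hg'
  by_cases hd : X.side g (γ' 0) = X.side g (γ 0)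
  · by_cases hcc : X.side g' (γ 0) = X.side g' (γ' 0)
    · right; right
      intro x ⟨hx1, hx2⟩
      apply hc
      intro b b'
      by_cases hb : b = X.side g (γ 0)
      · by_cases hb' : b' = X.side g' (γ' 0)
        · exact ⟨γ' 0, by rw [hb, ← hd], by rw [hb']⟩
        · refine ⟨γ' (k + 1), ?_, ?_⟩
          · rw [hb, ← hd]
            exact ray_const γ' hγ' g hgW (k + 1) ▸ rfl
          · rw [bool_ne_iff.mp hb']
            rw [hg', ray_side γ' hγ' k (k + 1)]
            simp
      · by_cases hb' : b' = X.side g' (γ' 0)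
        · refine ⟨γ (m + 1), ?_, ?_⟩
          · rw [bool_ne_iff.mp hb, hg, ray_side γ hγ m (m + 1)]
            simp
          · rw [hb', ← hcc]
            exact ray_const γ hγ g' (fun s => hg'W s) (m + 1) ▸ rfl
        · exact ⟨x, by rw [bool_ne_iff.mp hb, ← bool_ne_iff.mp hx1],
            by rw [bool_ne_iff.mp hb', ← bool_ne_iff.mp hx2]⟩
    · right; left; exact hcc
  · left; exact hd

/-- Classification for two hyperplanes dual to the same ray: they either
cross or are nested (the later one is deeper). -/
lemma same_ray_class (γ : ℕ → X.V) (hγ : X.IsGeodesicRay γ) (m m' : ℕ) (hmm : m < m')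
    (hc : ¬ X.Crosses (rayH γ hγ m) (rayH γ hγ m')) :
    ∀ x, X.side (rayH γ hγ m') x ≠ X.side (rayH γ hγ m') (γ 0) →
      X.side (rayH γ hγ m) x ≠ X.side (rayH γ hγ m) (γ 0) := by
  intro x hx
  by_contra hcontra
  apply hc

  intro b b'
  by_cases hb : b = X.side (rayH γ hγ m) (γ 0)
  · by_cases hb' : b' = X.side (rayH γ hγ m') (γ 0)
    · refine ⟨γ 0, by rw [hb], by rw [hb']⟩
    · exact ⟨x, by rw [hb, hcontra], by rw [bool_ne_iff.mp hb', ← bool_ne_iff.mp hx]⟩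
  · by_cases hb' : b' = X.side (rayH γ hγ m') (γ 0)
    · refine ⟨γ (m + 1), ?_, ?_⟩
      · rw [bool_ne_iff.mp hb, ray_side γ hγ m (m + 1)]; simp
      · rw [hb', ray_side γ hγ m' (m + 1)]
        simp [show m + 1 ≤ m' by omega]
    · refine ⟨γ (m' + 1), ?_, ?_⟩
      · rw [bool_ne_iff.mp hb, ray_side γ hγ m (m' + 1)]
        simp [show ¬ (m' + 1 ≤ m) by omega]
      · rw [bool_ne_iff.mp hb', ray_side γ hγ m' (m' + 1)]; simp

/-- In every infinite set of indices there is one with infinitely many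
`P`-successors, provided there is no infinite pairwise-crossing family. -/
lemma chain_key (hX : X.NoInfiniteCrossing) (T : ℕ → X.H) (hinj : Function.Injective T)
    (P : ℕ → ℕ → Prop) (hrel : ∀ a b, a < b → X.Crosses (T a) (T b) ∨ P a b) :
    ∀ B : Set ℕ, B.Infinite → ∃ m, m ∈ B ∧ {k | k ∈ B ∧ m < k ∧ P m k}.Infinite := by
  by_contra hkey
  push_neg at hkey
  obtain ⟨A, hA, hfin⟩ := hkey
  -- build an infinite pairwise-crossing family inside A
  have step : ∀ B : Set ℕ, B.Infinite → B ⊆ A →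
      ∃ m, m ∈ B ∧ {k | k ∈ B ∧ m < k ∧ ¬ P m k}.Infinite := by
    intro B hB hBA
    obtain ⟨m, hm⟩ := hB.nonempty
    refine ⟨m, hm, ?_⟩
    have : B \ (Set.Iic m ∪ {k | k ∈ A ∧ m < k ∧ P m k}) ⊆ {k | k ∈ B ∧ m < k ∧ ¬ P m k} := by
      intro k hk
      simp only [Set.mem_diff, Set.mem_union, Set.mem_Iic, Set.mem_setOf_eq, not_or] at hk
      refine ⟨hk.1, by omega, fun hP => hk.2.2 ⟨hBA hk.1, by omega, hP⟩⟩
    exact ((hB.diff (((Set.finite_Iic m).union (hfin m (hBA hm))))).mono this)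
  choose pick hpick hpickinf using step
  let F : ℕ → {B : Set ℕ // B.Infinite ∧ B ⊆ A} := fun t =>
    Nat.rec (motive := fun _ => {B : Set ℕ // B.Infinite ∧ B ⊆ A})
      ⟨A, hA, subset_rfl⟩
      (fun _ s => ⟨{k | k ∈ s.1 ∧ pick s.1 s.2.1 s.2.2 < k ∧ ¬ P (pick s.1 s.2.1 s.2.2) k},
        hpickinf s.1 s.2.1 s.2.2, fun k hk => s.2.2 hk.1⟩) t
  let ψ : ℕ → ℕ := fun t => pick (F t).1 (F t).2.1 (F t).2.2
  have hFsucc : ∀ t, (F (t + 1)).1 = {k | k ∈ (F t).1 ∧ ψ t < k ∧ ¬ P (ψ t) k} := fun t => rfl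
  have hmemF : ∀ t, ψ t ∈ (F t).1 := fun t => hpick (F t).1 (F t).2.1 (F t).2.2
  have hdec : ∀ t s, t ≤ s → (F s).1 ⊆ (F t).1 := by
    intro t s hts
    induction s with
    | zero => have : t = 0 := by omega
              subst this; exact subset_rfl
    | succ s ih =>
      rcases Nat.lt_or_ge t (s + 1) with h | h
      · intro k hk
        rw [hFsucc s] at hk
        exact ih (by omega) hk.1
      · have : t = s + 1 := by omega
        subst this; exact subset_rfl
  have hψ : ∀ a b, a < b → ψ a < ψ b ∧ ¬ P (ψ a) (ψ b) := by
    intro a b hab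
    have : ψ b ∈ (F (a + 1)).1 := hdec (a + 1) b hab (hmemF b)
    rw [hFsucc a] at this
    exact ⟨this.2.1, this.2.2⟩
  have hψinj : Function.Injective ψ := by
    intro a b hab
    by_contra hne
    rcases Nat.lt_or_ge a b with h | h
    · exact absurd hab (by have := (hψ a b h).1; omega)
    · have : b < a := by omega
      exact absurd hab.symm (by have := (hψ b a this).1; omega)
  have hcrossfam : ∀ h ∈ Set.range (T ∘ ψ), ∀ h' ∈ Set.range (T ∘ ψ), h ≠ h' → X.Crosses h h' := by
    rintro h ⟨a, rfl⟩ h' ⟨b, rfl⟩ hne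
    have hab : a ≠ b := fun h => hne (by rw [h])
    rcases Nat.lt_or_ge a b with h1 | h1
    · rcases hrel (ψ a) (ψ b) (hψ a b h1).1 with h2 | h2
      · exact h2
      · exact absurd h2 (hψ a b h1).2
    · have h1 : b < a := by omega
      rcases hrel (ψ b) (ψ a) (hψ b a h1).1 with h2 | h2
      · exact crosses_symm h2
      · exact absurd h2 (hψ b a h1).2
  have := hX (Set.range (T ∘ ψ)) hcrossfam
  exact (Set.infinite_range_of_injective (hinj.comp hψinj)) this

/-- Chain extraction: from no-infinite-crossing, extract an infinite
`P`-increasing subsequence. -/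
lemma exists_chain (hX : X.NoInfiniteCrossing) (T : ℕ → X.H) (hinj : Function.Injective T)
    (P : ℕ → ℕ → Prop) (hrel : ∀ a b, a < b → X.Crosses (T a) (T b) ∨ P a b) :
    ∃ φ : ℕ → ℕ, StrictMono φ ∧ ∀ a b, a < b → P (φ a) (φ b) := by
  have key := chain_key hX T hinj P hrel
  choose pick hpick hpickinf using key
  let F : ℕ → {B : Set ℕ // B.Infinite} := fun t =>
    Nat.rec (motive := fun _ => {B : Set ℕ // B.Infinite})
      ⟨Set.univ, Set.infinite_univ⟩
      (fun _ s => ⟨{k | k ∈ s.1 ∧ pick s.1 s.2 < k ∧ P (pick s.1 s.2) k}, hpickinf s.1 s.2⟩) t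
  let φ : ℕ → ℕ := fun t => pick (F t).1 (F t).2
  have hFsucc : ∀ t, (F (t + 1)).1 = {k | k ∈ (F t).1 ∧ φ t < k ∧ P (φ t) k} := fun t => rfl
  have hmemF : ∀ t, φ t ∈ (F t).1 := fun t => hpick (F t).1 (F t).2
  have hdec : ∀ t s, t ≤ s → (F s).1 ⊆ (F t).1 := by
    intro t s hts
    induction s with
    | zero => have : t = 0 := by omega
              subst this; exact subset_rfl
    | succ s ih =>
      rcases Nat.lt_or_ge t (s + 1) with h | h
      · intro k hk
        rw [hFsucc s] at hk
        exact ih (by omega) hk.1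
      · have : t = s + 1 := by omega
        subst this; exact subset_rfl
  have hφ : ∀ a b, a < b → φ a < φ b ∧ P (φ a) (φ b) := by
    intro a b hab
    have : φ b ∈ (F (a + 1)).1 := hdec (a + 1) b hab (hmemF b)
    rw [hFsucc a] at this
    exact ⟨this.2.1, this.2.2⟩
  exact ⟨φ, fun a b hab => (hφ a b hab).1, fun a b hab => (hφ a b hab).2⟩


/-- The tail crossing lemma: all sufficiently late hyperplanes of two rays
representing distinct vertices of a common simplex at infinity cross. -/
lemma tail_cross (hX : X.NoInfiniteCrossing) (V : Set X.H) (hV : X.IsUBS V)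
    (γ γ' : ℕ → X.V) (hγ : X.IsGeodesicRay γ) (hγ' : X.IsGeodesicRay γ') (L : ℕ)
    (hL : ∀ m, L ≤ m → rayH γ hγ m ∈ V ∧ (∀ s, rayH γ hγ m ≠ rayH γ' hγ' s) ∧
        X.side (rayH γ hγ m) (γ' 0) = X.side (rayH γ hγ m) (γ 0))
    (hL' : ∀ k, L ≤ k → rayH γ' hγ' k ∈ V ∧ (∀ s, rayH γ' hγ' k ≠ rayH γ hγ s) ∧
        X.side (rayH γ' hγ' k) (γ 0) = X.side (rayH γ' hγ' k) (γ' 0)) :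
    ∃ M K, ∀ m k, M ≤ m → K ≤ k → X.Crosses (rayH γ hγ m) (rayH γ' hγ' k) := by
  by_contra hcon
  push_neg at hcon
  obtain ⟨mf, kf, hmf, hkf, hncr⟩ :
      ∃ mf kf : ℕ → ℕ → ℕ, (∀ M K, M ≤ mf M K) ∧ (∀ M K, K ≤ kf M K) ∧
        (∀ M K, ¬ X.Crosses (rayH γ hγ (mf M K)) (rayH γ' hγ' (kf M K))) := by
    choose mf kf h1 h2 h3 using hcon
    exact ⟨mf, kf, h1, h2, h3⟩
  -- a sequence of strictly increasing bad (non-crossing) pairs, all late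
  let F : ℕ → ℕ × ℕ := fun t =>
    Nat.rec (motive := fun _ => ℕ × ℕ) (mf L L, kf L L)
      (fun _ p => (mf (p.1 + 1) (p.2 + 1), kf (p.1 + 1) (p.2 + 1))) t
  let ms : ℕ → ℕ := fun t => (F t).1
  let ks : ℕ → ℕ := fun t => (F t).2
  have hms0 : L ≤ ms 0 := hmf L L
  have hks0 : L ≤ ks 0 := hkf L L
  have hmssucc : ∀ t, ms t < ms (t + 1) := by
    intro t
    have : ms t + 1 ≤ mf (ms t + 1) (ks t + 1) := hmf _ _
    simpa [ms, F] using this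
  have hkssucc : ∀ t, ks t < ks (t + 1) := by
    intro t
    have : ks t + 1 ≤ kf (ms t + 1) (ks t + 1) := hkf _ _
    simpa [ks, F] using this
  have hmsmono : StrictMono ms := strictMono_nat_of_lt_succ hmssucc
  have hksmono : StrictMono ks := strictMono_nat_of_lt_succ hkssucc
  have hmsL : ∀ t, L ≤ ms t := fun t => le_trans hms0 (hmsmono.le_iff_le.mpr (Nat.zero_le t))
  have hksL : ∀ t, L ≤ ks t := fun t => le_trans hks0 (hksmono.le_iff_le.mpr (Nat.zero_le t))
  have hbad : ∀ t, ¬ X.Crosses (rayH γ hγ (ms t)) (rayH γ' hγ' (ks t)) := by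
    intro t
    cases t with
    | zero => exact hncr L L
    | succ t => exact hncr _ _
  -- every bad pair is facing
  have hfac : ∀ t, ∀ x, ¬(X.side (rayH γ hγ (ms t)) x ≠ X.side (rayH γ hγ (ms t)) (γ 0)
      ∧ X.side (rayH γ' hγ' (ks t)) x ≠ X.side (rayH γ' hγ' (ks t)) (γ' 0)) := by
    intro t
    rcases two_ray_class γ γ' hγ hγ' (ms t) (ks t)
      (hL (ms t) (hmsL t)).2.1 (hL' (ks t) (hksL t)).2.1 (hbad t) with h | h | h
    · exact absurd (hL (ms t) (hmsL t)).2.2 h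
    · exact absurd (hL' (ks t) (hksL t)).2.2 h
    · exact h
  -- extract nested chains on both sides
  obtain ⟨φ₁, hφ₁mono, hφ₁⟩ := exists_chain hX (fun t => rayH γ hγ (ms t))
    ((rayH_inj γ hγ).comp hmsmono.injective)
    (fun a b => ∀ x, X.side (rayH γ hγ (ms b)) x ≠ X.side (rayH γ hγ (ms b)) (γ 0) →
      X.side (rayH γ hγ (ms a)) x ≠ X.side (rayH γ hγ (ms a)) (γ 0))
    (fun a b hab => by
      rcases Classical.em (X.Crosses (rayH γ hγ (ms a)) (rayH γ hγ (ms b))) with h | h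
      · exact Or.inl h
      · exact Or.inr (same_ray_class γ hγ (ms a) (ms b) (hmsmono hab) h))
  obtain ⟨φ₂, hφ₂mono, hφ₂⟩ := exists_chain hX (fun l => rayH γ' hγ' (ks (φ₁ l)))
    ((rayH_inj γ' hγ').comp (hksmono.comp hφ₁mono).injective)
    (fun a b => ∀ x, X.side (rayH γ' hγ' (ks (φ₁ b))) x ≠ X.side (rayH γ' hγ' (ks (φ₁ b))) (γ' 0) →
      X.side (rayH γ' hγ' (ks (φ₁ a))) x ≠ X.side (rayH γ' hγ' (ks (φ₁ a))) (γ' 0))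
    (fun a b hab => by
      rcases Classical.em (X.Crosses (rayH γ' hγ' (ks (φ₁ a))) (rayH γ' hγ' (ks (φ₁ b)))) with h | h
      · exact Or.inl h
      · exact Or.inr (same_ray_class γ' hγ' (ks (φ₁ a)) (ks (φ₁ b)) (hksmono (hφ₁mono hab)) h))
  let r : ℕ → ℕ := fun t => φ₁ (φ₂ t)
  have hrmono : StrictMono r := hφ₁mono.comp hφ₂mono
  let G : ℕ → X.H := fun t => rayH γ hγ (ms (r t))
  let G' : ℕ → X.H := fun t => rayH γ' hγ' (ks (r t))
  have hGchain : ∀ a b, a < b → ∀ x,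
      X.side (G b) x ≠ X.side (G b) (γ 0) → X.side (G a) x ≠ X.side (G a) (γ 0) :=
    fun a b hab => hφ₁ (φ₂ a) (φ₂ b) (hφ₂mono hab)
  have hG'chain : ∀ a b, a < b → ∀ x,
      X.side (G' b) x ≠ X.side (G' b) (γ' 0) → X.side (G' a) x ≠ X.side (G' a) (γ' 0) :=
    fun a b hab => hφ₂ a b hab
  have hGfac : ∀ t, ∀ x, ¬(X.side (G t) x ≠ X.side (G t) (γ 0)
      ∧ X.side (G' t) x ≠ X.side (G' t) (γ' 0)) := fun t => hfac (r t)
  -- the contradiction with unidirectionality of V at G' 0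
  set u : X.H := G' 0 with hu
  set s' : Bool := X.side u (γ' 0) with hs'
  have huV : u ∈ V := (hL' (ks (r 0)) (hksL (r 0))).1
  have hA : ∀ t, G t ∈ {h | h ∈ V ∧ X.InHalf h u s'} := by
    intro t
    refine ⟨(hL (ms (r t)) (hmsL (r t))).1, (hL (ms (r t)) (hmsL (r t))).2.1 _, ?_⟩
    refine ⟨X.side (G t) (γ 0), fun x hx => ?_⟩
    by_contra hne
    have h0 : X.side (G 0) x ≠ X.side (G 0) (γ 0) := by
      rcases Nat.eq_zero_or_pos t with rfl | ht
      · exact hne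
      · exact hGchain 0 t ht x hne
    exact hGfac 0 x ⟨h0, by rw [hx]; simp; rfl⟩
  have hB : ∀ t, G' (t + 1) ∈ {h | h ∈ V ∧ X.InHalf h u (!s')} := by
    intro t
    refine ⟨(hL' (ks (r (t + 1))) (hksL (r (t + 1)))).1, ?_, ?_⟩
    · intro heq
      have := (rayH_inj γ' hγ') heq
      have := hksmono.injective this
      have := hrmono.injective this
      omega
    · refine ⟨X.side (G' (t + 1)) (γ' 0), fun x hx => ?_⟩
      rw [Bool.not_not] at hx
      by_contra hne
      exact (hG'chain 0 (t + 1) (Nat.succ_pos t) x hne) hx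
  have hAinf : {h | h ∈ V ∧ X.InHalf h u s'}.Infinite := by
    exact Set.infinite_of_injective_forall_mem
      ((rayH_inj γ hγ).comp (hmsmono.comp hrmono).injective) hA
  have hBinf : {h | h ∈ V ∧ X.InHalf h u (!s')}.Infinite := by
    refine Set.infinite_of_injective_forall_mem (f := fun t => G' (t + 1)) ?_ hB
    intro a b hab
    have := (rayH_inj γ' hγ') hab
    have := hksmono.injective this
    have := hrmono.injective this
    omega
  obtain ⟨b, hbfin⟩ := hV.2.2.1 u huV
  have : b = s' ∨ b = !s' := by cases b <;> cases s' <;> simp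
  rcases this with rfl | rfl
  · exact hAinf hbfin
  · exact hBinf hbfin

/-- All the data needed to build an orthant: `n+1` geodesic rays whose
hyperplane sets have pairwise disjoint, pairwise-crossing tails. -/
structure Frame (X : CCC) (n : ℕ) where
  γ : Fin (n + 1) → ℕ → X.V
  hγ : ∀ i, X.IsGeodesicRay (γ i)
  N : Fin (n + 1) → ℕ
  hdisj : ∀ i j m k, i ≠ j → N i ≤ m → rayH (γ i) (hγ i) m ≠ rayH (γ j) (hγ j) k
  hcross : ∀ i j m k, i ≠ j → N i ≤ m → N j ≤ k →
      X.Crosses (rayH (γ i) (hγ i) m) (rayH (γ j) (hγ j) k)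

namespace Frame

variable {X : CCC} {n : ℕ} (Fr : Frame X n)

/-- The `m`-th hyperplane of the `i`-th ray. -/
noncomputable def Hh (i : Fin (n + 1)) (m : ℕ) : X.H := rayH (Fr.γ i) (Fr.hγ i) m

/-- The basepoint side. -/
noncomputable def base (i : Fin (n + 1)) (g : X.H) : Bool := X.side g (Fr.γ i 0)

/-- The tail of the `i`-th ray. -/
def tl (i : Fin (n + 1)) : Set X.H := {g | ∃ m, Fr.N i ≤ m ∧ g = Fr.Hh i m}

def tlU : Set X.H := {g | ∃ i m, Fr.N i ≤ m ∧ g = Fr.Hh i m}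

/-- The limit orientation of the `i`-th ray. -/
noncomputable def lam (i : Fin (n + 1)) (g : X.H) : Bool :=
  if (∃ m, g = Fr.Hh i m) then !(Fr.base i g) else Fr.base i g

/-- `g` is "forced" from direction `i`. -/
def fw (i : Fin (n + 1)) (g : X.H) : Prop :=
  ∃ m, Fr.N i ≤ m ∧ ∀ x, X.side (Fr.Hh i m) x ≠ Fr.base i (Fr.Hh i m) → X.side g x = Fr.lam i g

/-- `g` is "blocked" from direction `i`. -/
def bk (i : Fin (n + 1)) (g : X.H) : Prop :=
  ∃ m, Fr.N i ≤ m ∧ ∀ x, X.side (Fr.Hh i m) x = Fr.base i (Fr.Hh i m) → X.side g x = Fr.lam i g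

def dem (i : Fin (n + 1)) (g : X.H) : Prop := Fr.fw i g ∨ Fr.bk i g

lemma tl_unique {i i' : Fin (n + 1)} {m m' : ℕ} (hm : Fr.N i ≤ m)
    (he : Fr.Hh i m = Fr.Hh i' m') : i = i' ∧ m = m' := by
  by_cases hii : i = i'
  · subst hii
    exact ⟨rfl, rayH_inj _ (Fr.hγ i) he⟩
  · exact absurd he (Fr.hdisj i i' m m' hii hm)

lemma Hh_side (i : Fin (n + 1)) (m t : ℕ) :
    X.side (Fr.Hh i m) (Fr.γ i t)
      = if t ≤ m then Fr.base i (Fr.Hh i m) else !(Fr.base i (Fr.Hh i m)) :=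
  ray_side (Fr.γ i) (Fr.hγ i) m t

lemma not_tl_side (i : Fin (n + 1)) (g : X.H) (hg : g ∉ Fr.tl i) (t : ℕ) (ht : Fr.N i ≤ t) :
    X.side g (Fr.γ i t) = Fr.lam i g := by
  by_cases hr : ∃ m, g = Fr.Hh i m
  · obtain ⟨m, rfl⟩ := hr
    have hm : m < Fr.N i := by
      by_contra h
      exact hg ⟨m, by omega, rfl⟩
    rw [Fr.Hh_side i m t, if_neg (by omega)]
    unfold lam
    rw [if_pos ⟨m, rfl⟩]
  · have := ray_const (Fr.γ i) (Fr.hγ i) g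
      (fun m hm => hr ⟨m, hm⟩) t
    rw [this]
    unfold lam
    rw [if_neg hr]
    rfl

lemma notU_not_tl {g : X.H} (hg : g ∉ Fr.tlU) (i : Fin (n + 1)) : g ∉ Fr.tl i :=
  fun ⟨m, hm, he⟩ => hg ⟨i, m, hm, he⟩

lemma dem_half {i : Fin (n + 1)} {g : X.H} (hd : Fr.dem i g) :
    ∃ m, Fr.N i ≤ m ∧ ∃ bA : Bool, ∀ x, X.side (Fr.Hh i m) x = bA → X.side g x = Fr.lam i g := by
  rcases hd with ⟨m, hm, hfw⟩ | ⟨m, hm, hbk⟩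
  · exact ⟨m, hm, !(Fr.base i (Fr.Hh i m)), fun x hx => hfw x (by rw [hx]; simp)⟩
  · exact ⟨m, hm, Fr.base i (Fr.Hh i m), hbk⟩

lemma dem_consistent {i j : Fin (n + 1)} {g : X.H} (hi : Fr.dem i g) (hj : Fr.dem j g) :
    Fr.lam i g = Fr.lam j g := by
  by_cases hij : i = j
  · subst hij; rfl
  · by_contra hne
    obtain ⟨m, hm, bA, hA⟩ := Fr.dem_half hi
    obtain ⟨k, hk, bB, hB⟩ := Fr.dem_half hj
    obtain ⟨x, hx1, hx2⟩ := Fr.hcross i j m k hij hm hk bA bB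
    have e1 := hA x hx1
    have e2 := hB x hx2
    rw [e1, bool_ne_iff.mp hne] at e2
    simp at e2

/-- The corner orientation. -/
noncomputable def sig (g : X.H) : Bool :=
  if h : ∃ i, Fr.dem i g then Fr.lam h.choose g else Fr.lam 0 g

lemma sig_dem {j : Fin (n + 1)} {g : X.H} (hj : Fr.dem j g) : Fr.sig g = Fr.lam j g := by
  unfold sig
  rw [dif_pos ⟨j, hj⟩]
  exact Fr.dem_consistent (Exists.choose_spec (⟨j, hj⟩ : ∃ i, Fr.dem i g)) hj

lemma sig_exists (g : X.H) : ∃ i, Fr.sig g = Fr.lam i g := by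
  unfold sig
  split
  · next h => exact ⟨h.choose, rfl⟩
  · exact ⟨0, rfl⟩

lemma sig_undem {g : X.H} (h : ¬ ∃ i, Fr.dem i g) : Fr.sig g = Fr.lam 0 g := by
  unfold sig
  rw [dif_neg h]

/-- Witness: near halfspace of a tail hyperplane meets the `sig` halfspace. -/
lemma wit_near (i : Fin (n + 1)) (m : ℕ) (hm : Fr.N i ≤ m) (g' : X.H) (hg' : g' ∉ Fr.tlU) :
    ∃ x, X.side (Fr.Hh i m) x = Fr.base i (Fr.Hh i m) ∧ X.side g' x = Fr.sig g' := by
  by_cases hs : Fr.sig g' = Fr.lam i g'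
  · by_cases hr : ∃ t, g' = Fr.Hh i t
    · obtain ⟨t, rfl⟩ := hr
      have ht : t < Fr.N i := by
        by_contra h
        exact hg' ⟨i, t, by omega, rfl⟩
      refine ⟨Fr.γ i (t + 1), ?_, ?_⟩
      · rw [Fr.Hh_side i m (t + 1), if_pos (by omega)]
      · rw [Fr.Hh_side i t (t + 1), if_neg (by omega), hs]
        unfold lam
        rw [if_pos ⟨t, rfl⟩]
    · refine ⟨Fr.γ i 0, ?_, ?_⟩
      · rw [Fr.Hh_side i m 0, if_pos (by omega)]
      · rw [hs]
        unfold lam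
        rw [if_neg hr]
        rfl
  · have hnd : ¬ Fr.dem i g' := fun hd => hs (Fr.sig_dem hd)
    have hnb : ¬ Fr.bk i g' := fun hb => hnd (Or.inr hb)
    unfold bk at hnb
    push_neg at hnb
    obtain ⟨x, hx1, hx2⟩ := hnb m hm
    exact ⟨x, hx1, by rw [bool_ne_iff.mp hx2, ← bool_ne_iff.mp hs]⟩

/-- Witness: far halfspace of a tail hyperplane meets the `sig` halfspace. -/
lemma wit_far (i : Fin (n + 1)) (m : ℕ) (hm : Fr.N i ≤ m) (g' : X.H) (hg' : g' ∉ Fr.tlU) :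
    ∃ x, X.side (Fr.Hh i m) x = !(Fr.base i (Fr.Hh i m)) ∧ X.side g' x = Fr.sig g' := by
  by_cases hs : Fr.sig g' = Fr.lam i g'
  · refine ⟨Fr.γ i (m + 1), ?_, ?_⟩
    · rw [Fr.Hh_side i m (m + 1), if_neg (by omega)]
    · rw [hs]
      exact Fr.not_tl_side i g' (Fr.notU_not_tl hg' i) (m + 1) (by omega)
  · have hnd : ¬ Fr.dem i g' := fun hd => hs (Fr.sig_dem hd)
    have hnf : ¬ Fr.fw i g' := fun hb => hnd (Or.inl hb)
    unfold fw at hnf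
    push_neg at hnf
    obtain ⟨x, hx1, hx2⟩ := hnf m hm
    exact ⟨x, bool_ne_iff.mp hx1, by rw [bool_ne_iff.mp hx2, ← bool_ne_iff.mp hs]⟩

lemma wit_out_dem {g' g'' : X.H} (hg' : g' ∉ Fr.tlU) (hg'' : g'' ∉ Fr.tlU)
    (hd : ∃ j, Fr.dem j g'') :
    ∃ x, X.side g' x = Fr.sig g' ∧ X.side g'' x = Fr.sig g'' := by
  obtain ⟨j, hj⟩ := hd
  have hsig'' : Fr.sig g'' = Fr.lam j g'' := Fr.sig_dem hj
  obtain ⟨k, hk, bB, hB⟩ := Fr.dem_half hj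
  by_cases h3 : Fr.sig g' = Fr.lam j g'
  · by_cases hbB : bB = Fr.base j (Fr.Hh j k)
    · obtain ⟨x, hx1, hx2⟩ := Fr.wit_near j k hk g' hg'
      exact ⟨x, hx2, by rw [hsig'']; exact hB x (by rw [hx1, hbB])⟩
    · obtain ⟨x, hx1, hx2⟩ := Fr.wit_far j k hk g' hg'
      exact ⟨x, hx2, by rw [hsig'']; exact hB x (by rw [hx1, ← bool_ne_iff.mp hbB])⟩
  · have hnd : ¬ Fr.dem j g' := fun hd' => h3 (Fr.sig_dem hd')
    by_cases hbB : bB = Fr.base j (Fr.Hh j k)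
    · have hnb : ¬ Fr.bk j g' := fun hb => hnd (Or.inr hb)
      unfold bk at hnb
      push_neg at hnb
      obtain ⟨x, hx1, hx2⟩ := hnb k hk
      refine ⟨x, by rw [bool_ne_iff.mp hx2, ← bool_ne_iff.mp h3], ?_⟩
      rw [hsig'']
      exact hB x (by rw [hx1, hbB])
    · have hnf : ¬ Fr.fw j g' := fun hb => hnd (Or.inl hb)
      unfold fw at hnf
      push_neg at hnf
      obtain ⟨x, hx1, hx2⟩ := hnf k hk
      refine ⟨x, by rw [bool_ne_iff.mp hx2, ← bool_ne_iff.mp h3], ?_⟩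
      rw [hsig'']
      exact hB x (by rw [bool_ne_iff.mp hx1, ← bool_ne_iff.mp hbB])

/-- Witness: the `sig` halfspaces of two non-tail hyperplanes meet. -/
lemma wit_out (g' g'' : X.H) (hg' : g' ∉ Fr.tlU) (hg'' : g'' ∉ Fr.tlU) :
    ∃ x, X.side g' x = Fr.sig g' ∧ X.side g'' x = Fr.sig g'' := by
  by_cases hd'' : ∃ j, Fr.dem j g''
  · exact Fr.wit_out_dem hg' hg'' hd''
  · by_cases hd' : ∃ j, Fr.dem j g'
    · obtain ⟨x, h1, h2⟩ := Fr.wit_out_dem hg'' hg' hd'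
      exact ⟨x, h2, h1⟩
    · refine ⟨Fr.γ 0 (Fr.N 0), ?_, ?_⟩
      · rw [Fr.sig_undem hd']
        exact Fr.not_tl_side 0 g' (Fr.notU_not_tl hg' 0) (Fr.N 0) le_rfl
      · rw [Fr.sig_undem hd'']
        exact Fr.not_tl_side 0 g'' (Fr.notU_not_tl hg'' 0) (Fr.N 0) le_rfl

lemma base_def (i : Fin (n + 1)) (g : X.H) : Fr.base i g = X.side g (Fr.γ i 0) := rfl

/-- The orientation of the `p`-th vertex of the orthant. -/
noncomputable def om (p : Fin (n + 1) → ℕ) (g : X.H) : Bool :=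
  if h : ∃ i m, Fr.N i ≤ m ∧ g = Fr.Hh i m then
    (if h.choose_spec.choose < Fr.N h.choose + p h.choose
      then !(Fr.base h.choose g) else Fr.base h.choose g)
  else Fr.sig g

lemma om_tl (p : Fin (n + 1) → ℕ) (i : Fin (n + 1)) (m : ℕ) (hm : Fr.N i ≤ m) :
    Fr.om p (Fr.Hh i m)
      = if m < Fr.N i + p i then !(Fr.base i (Fr.Hh i m)) else Fr.base i (Fr.Hh i m) := by
  unfold om
  have hEx : ∃ i' m', Fr.N i' ≤ m' ∧ Fr.Hh i m = Fr.Hh i' m' := ⟨i, m, hm, rfl⟩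
  rw [dif_pos hEx]
  obtain ⟨h1, h2⟩ := hEx.choose_spec.choose_spec
  obtain ⟨hi, hmm⟩ := Fr.tl_unique h1 h2.symm
  rw [hmm, hi]

lemma om_out (p : Fin (n + 1) → ℕ) (g : X.H)
    (hg : ¬ ∃ i m, Fr.N i ≤ m ∧ g = Fr.Hh i m) : Fr.om p g = Fr.sig g := by
  unfold om
  rw [dif_neg hg]

lemma om_cons (p : Fin (n + 1) → ℕ) (g g' : X.H) :
    ∃ x, X.side g x = Fr.om p g ∧ X.side g' x = Fr.om p g' := by
  by_cases hg : ∃ i m, Fr.N i ≤ m ∧ g = Fr.Hh i m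
  · obtain ⟨i, m, hm, rfl⟩ := hg
    by_cases hg' : ∃ j k, Fr.N j ≤ k ∧ g' = Fr.Hh j k
    · obtain ⟨j, k, hk, rfl⟩ := hg'
      rw [Fr.om_tl p i m hm, Fr.om_tl p j k hk]
      by_cases hij : i = j
      · subst hij
        by_cases h1 : m < Fr.N i + p i <;> by_cases h2 : k < Fr.N i + p i
        · refine ⟨Fr.γ i (max m k + 1), ?_, ?_⟩
          · rw [if_pos h1, Fr.Hh_side, if_neg (by omega)]
          · rw [if_pos h2, Fr.Hh_side, if_neg (by omega)]
        · refine ⟨Fr.γ i (m + 1), ?_, ?_⟩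
          · rw [if_pos h1, Fr.Hh_side, if_neg (by omega)]
          · rw [if_neg h2, Fr.Hh_side, if_pos (by omega)]
        · refine ⟨Fr.γ i (k + 1), ?_, ?_⟩
          · rw [if_neg h1, Fr.Hh_side, if_pos (by omega)]
          · rw [if_pos h2, Fr.Hh_side, if_neg (by omega)]
        · refine ⟨Fr.γ i 0, ?_, ?_⟩
          · rw [if_neg h1, Fr.Hh_side, if_pos (by omega)]
          · rw [if_neg h2, Fr.Hh_side, if_pos (by omega)]
      · exact Fr.hcross i j m k hij hm hk _ _
    · rw [Fr.om_tl p i m hm, Fr.om_out p g' hg']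
      by_cases h1 : m < Fr.N i + p i
      · rw [if_pos h1]; exact Fr.wit_far i m hm g' hg'
      · rw [if_neg h1]; exact Fr.wit_near i m hm g' hg'
  · by_cases hg' : ∃ j k, Fr.N j ≤ k ∧ g' = Fr.Hh j k
    · obtain ⟨j, k, hk, rfl⟩ := hg'
      rw [Fr.om_out p g hg, Fr.om_tl p j k hk]
      by_cases h1 : k < Fr.N j + p j
      · rw [if_pos h1]
        obtain ⟨x, h2, h3⟩ := Fr.wit_far j k hk g hg
        exact ⟨x, h3, h2⟩
      · rw [if_neg h1]
        obtain ⟨x, h2, h3⟩ := Fr.wit_near j k hk g hg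
        exact ⟨x, h3, h2⟩
    · rw [Fr.om_out p g hg, Fr.om_out p g' hg']
      exact Fr.wit_out g g' hg hg'

lemma om_finite (p : Fin (n + 1) → ℕ) :
    {h : X.H | Fr.om p h ≠ X.side h (Fr.γ 0 (Fr.N 0))}.Finite := by
  have hbig : {h : X.H | Fr.om p h ≠ X.side h (Fr.γ 0 (Fr.N 0))} ⊆
      (⋃ i, Fr.Hh i '' (Set.Iio (Fr.N i + p i)))
        ∪ ((⋃ i, sepSet X (Fr.γ i 0) (Fr.γ 0 0)) ∪ (⋃ i, Fr.Hh i '' (Set.Iio (Fr.N i)))) := by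
    intro h hh
    simp only [Set.mem_setOf_eq] at hh
    by_cases hg : ∃ i m, Fr.N i ≤ m ∧ h = Fr.Hh i m
    · obtain ⟨i, m, hm, rfl⟩ := hg
      rw [Fr.om_tl p i m hm] at hh
      by_cases h1 : m < Fr.N i + p i
      · exact Or.inl (Set.mem_iUnion.mpr ⟨i, ⟨m, h1, rfl⟩⟩)
      · rw [if_neg h1] at hh
        by_cases hi0 : i = 0
        · subst hi0
          exact absurd (by rw [Fr.Hh_side 0 m (Fr.N 0), if_pos hm]) hh
        · refine Or.inr (Or.inl (Set.mem_iUnion.mpr ⟨i, ?_⟩))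
          have hcon : X.side (Fr.Hh i m) (Fr.γ 0 (Fr.N 0)) = X.side (Fr.Hh i m) (Fr.γ 0 0) :=
            ray_const (Fr.γ 0) (Fr.hγ 0) _ (fun s hs => Fr.hdisj i 0 m s hi0 hm hs) _
          intro he
          exact hh (he.trans hcon.symm)
    · rw [Fr.om_out p h hg] at hh
      obtain ⟨i, hi⟩ := Fr.sig_exists h
      have h0 : X.side h (Fr.γ 0 (Fr.N 0)) = Fr.lam 0 h :=
        Fr.not_tl_side 0 h (fun ⟨m, hm, he⟩ => hg ⟨0, m, hm, he⟩) (Fr.N 0) le_rfl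
      rw [hi, h0] at hh
      by_cases hri : ∃ m, h = Fr.Hh i m
      · obtain ⟨m, rfl⟩ := hri
        have hmN : m < Fr.N i := by
          by_contra hc
          exact hg ⟨i, m, by omega, rfl⟩
        exact Or.inr (Or.inr (Set.mem_iUnion.mpr ⟨i, ⟨m, hmN, rfl⟩⟩))
      · by_cases hr0 : ∃ m, h = Fr.Hh 0 m
        · obtain ⟨m, rfl⟩ := hr0
          have hmN : m < Fr.N 0 := by
            by_contra hc
            exact hg ⟨0, m, by omega, rfl⟩
          exact Or.inr (Or.inr (Set.mem_iUnion.mpr ⟨0, ⟨m, hmN, rfl⟩⟩))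
        · refine Or.inr (Or.inl (Set.mem_iUnion.mpr ⟨i, ?_⟩))
          unfold lam at hh
          rw [if_neg hri, if_neg hr0] at hh
          exact hh
  refine Set.Finite.subset ?_ hbig
  refine Set.Finite.union ?_ (Set.Finite.union ?_ ?_)
  · exact Set.finite_iUnion (fun i => (Set.finite_Iio _).image _)
  · exact Set.finite_iUnion (fun i => X.sep_finite _ _)
  · exact Set.finite_iUnion (fun i => (Set.finite_Iio _).image _)

/-- The `p`-th vertex of the orthant. -/
noncomputable def corner (p : Fin (n + 1) → ℕ) : X.V :=
  (X.realize (Fr.om p) (Fr.γ 0 (Fr.N 0)) (Fr.om_cons p) (Fr.om_finite p)).choose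

lemma corner_side (p : Fin (n + 1) → ℕ) (g : X.H) :
    X.side g (Fr.corner p) = Fr.om p g :=
  (X.realize (Fr.om p) (Fr.γ 0 (Fr.N 0)) (Fr.om_cons p) (Fr.om_finite p)).choose_spec g

lemma nat_dist_eq (a b : ℕ) : Nat.dist a b = max a b - min a b := by
  simp [Nat.dist]
  omega

lemma dist_corner (p q : Fin (n + 1) → ℕ) :
    X.dist (Fr.corner p) (Fr.corner q) = ∑ i, Nat.dist (p i) (q i) := by
  classical
  set F : Finset X.H := Finset.univ.biUnion (fun i : Fin (n + 1) =>
    (Finset.Ico (Fr.N i + min (p i) (q i)) (Fr.N i + max (p i) (q i))).image (Fr.Hh i)) with hF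
  have hmemF : ∀ h, h ∈ F ↔ X.side h (Fr.corner p) ≠ X.side h (Fr.corner q) := by
    intro h
    rw [Fr.corner_side p h, Fr.corner_side q h]
    constructor
    · intro hh
      simp only [hF, Finset.mem_biUnion, Finset.mem_image, Finset.mem_Ico] at hh
      obtain ⟨i, -, m, ⟨hm1, hm2⟩, rfl⟩ := hh
      have hm : Fr.N i ≤ m := by omega
      rw [Fr.om_tl p i m hm, Fr.om_tl q i m hm]
      rcases Nat.lt_or_ge m (Fr.N i + p i) with h1 | h1 <;>
        rcases Nat.lt_or_ge m (Fr.N i + q i) with h2 | h2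
      · omega
      · rw [if_pos h1, if_neg (by omega)]
        cases Fr.base i (Fr.Hh i m) <;> simp
      · rw [if_neg (by omega), if_pos h2]
        cases Fr.base i (Fr.Hh i m) <;> simp
      · omega
    · intro hh
      by_cases hg : ∃ i m, Fr.N i ≤ m ∧ h = Fr.Hh i m
      · obtain ⟨i, m, hm, rfl⟩ := hg
        rw [Fr.om_tl p i m hm, Fr.om_tl q i m hm] at hh
        have hrange : Fr.N i + min (p i) (q i) ≤ m ∧ m < Fr.N i + max (p i) (q i) := by
          by_cases h1 : m < Fr.N i + p i <;> by_cases h2 : m < Fr.N i + q i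
          · rw [if_pos h1, if_pos h2] at hh
            exact absurd rfl hh
          · omega
          · omega
          · rw [if_neg h1, if_neg h2] at hh
            exact absurd rfl hh
        simp only [hF, Finset.mem_biUnion, Finset.mem_image, Finset.mem_Ico]
        exact ⟨i, Finset.mem_univ i, m, hrange, rfl⟩
      · rw [Fr.om_out p h hg, Fr.om_out q h hg] at hh
        exact absurd rfl hh
  rw [dist_eq_card _ _ F (fun h => (hmemF h))]
  rw [hF, Finset.card_biUnion]
  · apply Finset.sum_congr rfl
    intro i _
    have hinj : Set.InjOn (Fr.Hh i)
        ↑(Finset.Ico (Fr.N i + min (p i) (q i)) (Fr.N i + max (p i) (q i))) :=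
      fun a _ b _ hab => rayH_inj _ (Fr.hγ i) hab
    rw [Finset.card_image_of_injOn hinj]
    rw [Nat.card_Ico, nat_dist_eq]
    omega
  · intro i _ j _ hij
    refine Finset.disjoint_left.mpr ?_
    rintro h hhi hhj
    simp only [Finset.mem_image, Finset.mem_Ico] at hhi hhj
    obtain ⟨m, hm, rfl⟩ := hhi
    obtain ⟨k, hk, he⟩ := hhj
    exact Fr.hdisj i j m k hij (by omega) he.symm

/-- Any frame yields an isometrically embedded orthant. -/
lemma orthant {X : CCC} {n : ℕ} (Fr : Frame X n) : ∃ e : (Fin (n + 1) → ℕ) → X.V,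
    ∀ p q, X.dist (e p) (e q) = ∑ i, Nat.dist (p i) (q i) :=
  ⟨Fr.corner, Fr.dist_corner⟩

end Frame


end CCCOrth

/-- Theorem 4.17.  If `v` is an `n`-simplex of `∂X` (a UBS of dimension
`n+1`), each of whose 0-dimensional faces is visible, then the standard
tiling of `[0,∞)^{n+1}` by unit `(n+1)`-cubes embeds isometrically and
cubically into `X` (here recorded on 0-skeleta: an `ℓ¹`-isometric embedding
of the vertex set `ℕ^{n+1}`). -/
theorem visible_simplex_gives_orthant (X : CCC) (hX : X.NoInfiniteCrossing)
    (n : ℕ) (V : Set X.H) (hV : X.IsUBS V) (hdim : X.HasDim V (n + 1))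
    (hvis : ∀ U : Set X.H, X.MinUBS U → X.FaceOf U V →
      ∃ γ : ℕ → X.V, X.IsGeodesicRay γ ∧ X.AlmostEq (X.WSet γ) U) :
    ∃ e : (Fin (n + 1) → ℕ) → X.V,
      ∀ p q, X.dist (e p) (e q) = ∑ i, Nat.dist (p i) (q i) := by
  classical
  open CCCOrth in
  obtain ⟨𝒰, hmin, hUdisj, haeq⟩ := hdim
  -- each 𝒰 i is almost contained in V
  have hUV : ∀ i, (𝒰 i \ V).Finite := by
    intro i
    refine haeq.subset ?_
    intro g hg
    exact Set.mem_symmDiff.mpr (Or.inr ⟨Set.mem_iUnion.mpr ⟨i, hg.1⟩, hg.2⟩)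
  -- each 𝒰 i is a face of V, hence visible
  have hface : ∀ i, X.FaceOf (𝒰 i) V := by
    intro i
    have hUBS : X.IsUBS (𝒰 i ∩ V) := by
      refine ⟨?_, ?_, ?_, ?_⟩
      · have h1 : (𝒰 i \ (𝒰 i \ V)).Infinite := (hmin i).1.1.diff (hUV i)
        refine h1.mono ?_
        intro g hg
        simp only [Set.mem_diff, not_and, not_not] at hg
        exact ⟨hg.1, hg.2 hg.1⟩
      · intro u hu u' hu' h hsep
        exact ⟨(hmin i).1.2.1 u hu.1 u' hu'.1 h hsep, hV.2.1 u hu.2 u' hu'.2 h hsep⟩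
      · intro u hu
        obtain ⟨b, hb⟩ := (hmin i).1.2.2.1 u hu.1
        exact ⟨b, hb.subset (fun h hh => ⟨hh.1.1, hh.2⟩)⟩
      · intro h1 h1m h2 h2m h3 h3m
        exact (hmin i).1.2.2.2 h1 h1m.1 h2 h2m.1 h3 h3m.1
    refine ⟨𝒰 i ∩ V, V, hUBS, hV, ?_, ?_, Set.inter_subset_right⟩
    · refine (hUV i).subset ?_
      intro g hg
      rcases Set.mem_symmDiff.mp hg with ⟨hg1, hg2⟩ | ⟨hg1, hg2⟩
      · exact ⟨hg1, fun hgV => hg2 ⟨hg1, hgV⟩⟩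
      · exact absurd hg1.1 hg2
    · simp [CCC.AlmostEq]
  choose γ hγ hW using fun i => hvis (𝒰 i) (hmin i) (hface i)
  -- the late part of each ray lies in `𝒰 i ∩ V` and avoids the other rays
  have hWU : ∀ i, (X.WSet (γ i) \ 𝒰 i).Finite := by
    intro i
    exact (hW i).subset (fun g hg => Set.mem_symmDiff.mpr (Or.inl hg))
  have hUW : ∀ i, (𝒰 i \ X.WSet (γ i)).Finite := by
    intro i
    exact (hW i).subset (fun g hg => Set.mem_symmDiff.mpr (Or.inr hg))
  have hWW : ∀ i j, i ≠ j → (X.WSet (γ i) ∩ X.WSet (γ j)).Finite := by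
    intro i j hij
    refine ((hWU i).union (hWU j)).subset ?_
    intro g hg
    by_cases hgi : g ∈ 𝒰 i
    · have hgj : g ∉ 𝒰 j := fun hgj => (hUdisj i j hij).le_bot ⟨hgi, hgj⟩
      exact Or.inr ⟨hg.2, hgj⟩
    · exact Or.inl ⟨hg.1, hgi⟩
  have hWV : ∀ i, (X.WSet (γ i) \ V).Finite := by
    intro i
    refine ((hWU i).union (hUV i)).subset ?_
    intro g hg
    by_cases hgi : g ∈ 𝒰 i
    · exact Or.inr ⟨hgi, hg.2⟩
    · exact Or.inl ⟨hg.1, hgi⟩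
  -- pointwise lateness conditions
  have hP : ∀ i j, i ≠ j → ∃ A : ℕ, ∀ m, A ≤ m →
      rayH (γ i) (hγ i) m ∈ V ∧ (∀ s, rayH (γ i) (hγ i) m ≠ rayH (γ j) (hγ j) s) ∧
        X.side (rayH (γ i) (hγ i) m) (γ j 0) = X.side (rayH (γ i) (hγ i) m) (γ i 0) := by
    intro i j hij
    have hmemW : ∀ m, rayH (γ i) (hγ i) m ∈ X.WSet (γ i) := by
      intro m
      exact (mem_WSet_iff (γ i) (hγ i) _).mpr ⟨m, rfl⟩
    have hfin : ({m : ℕ | rayH (γ i) (hγ i) m ∈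
        ((X.WSet (γ i) \ V) ∪ ((X.WSet (γ i) ∩ X.WSet (γ j)) ∪ sepSet X (γ j 0) (γ i 0)))}).Finite := by
      refine Set.Finite.preimage (Set.injOn_of_injective (rayH_inj (γ i) (hγ i))) ?_
      exact ((hWV i).union ((hWW i j hij).union (X.sep_finite _ _)))
    obtain ⟨a, ha⟩ := hfin.bddAbove
    refine ⟨a + 1, fun m hm => ?_⟩
    have hnot : rayH (γ i) (hγ i) m ∉
        ((X.WSet (γ i) \ V) ∪ ((X.WSet (γ i) ∩ X.WSet (γ j)) ∪ sepSet X (γ j 0) (γ i 0))) := by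
      intro hmem
      have := ha (Set.mem_setOf_eq ▸ hmem)
      omega
    simp only [Set.mem_union, not_or] at hnot
    refine ⟨?_, ?_, ?_⟩
    · by_contra hc
      exact hnot.1 ⟨hmemW m, hc⟩
    · intro s hs
      apply hnot.2.1
      refine ⟨hmemW m, ?_⟩
      rw [hs]
      exact (mem_WSet_iff (γ j) (hγ j) _).mpr ⟨s, rfl⟩
    · by_contra hc
      exact hnot.2.2 hc
  have hPex : ∀ i j, ∃ A : ℕ, ∀ m, A ≤ m → i ≠ j →
      rayH (γ i) (hγ i) m ∈ V ∧ (∀ s, rayH (γ i) (hγ i) m ≠ rayH (γ j) (hγ j) s) ∧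
        X.side (rayH (γ i) (hγ i) m) (γ j 0) = X.side (rayH (γ i) (hγ i) m) (γ i 0) := by
    intro i j
    by_cases hij : i = j
    · exact ⟨0, fun m _ hij' => absurd hij hij'⟩
    · obtain ⟨A, hA⟩ := hP i j hij
      exact ⟨A, fun m hm _ => hA m hm⟩
  choose A hA using hPex
  -- tail crossing bounds
  have hTC : ∀ i j, ∃ M K : ℕ, ∀ m k, M ≤ m → K ≤ k → i ≠ j →
      X.Crosses (rayH (γ i) (hγ i) m) (rayH (γ j) (hγ j) k) := by
    intro i j
    by_cases hij : i = j
    · exact ⟨0, 0, fun m k _ _ hij' => absurd hij hij'⟩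
    · obtain ⟨M, K, hMK⟩ := tail_cross hX V hV (γ i) (γ j) (hγ i) (hγ j)
        (max (A i j) (A j i))
        (fun m hm => hA i j m (le_trans (le_max_left _ _) hm) hij)
        (fun k hk => hA j i k (le_trans (le_max_right _ _) hk) (Ne.symm hij))
      exact ⟨M, K, fun m k hm hk _ => hMK m k hm hk⟩
  choose Mf Kf hMK using hTC
  -- define the tail-start indices
  set N : Fin (n + 1) → ℕ := fun i =>
    (Finset.univ.sup (A i)) + (Finset.univ.sup (Mf i)) + (Finset.univ.sup (fun j => Kf j i))
    with hN
  have hNA : ∀ i j, A i j ≤ N i := by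
    intro i j
    have h1 : A i j ≤ Finset.univ.sup (A i) := Finset.le_sup (Finset.mem_univ j)
    simp only [hN]
    omega
  have hNM : ∀ i j, Mf i j ≤ N i := by
    intro i j
    have h1 : Mf i j ≤ Finset.univ.sup (Mf i) := Finset.le_sup (Finset.mem_univ j)
    simp only [hN]
    omega
  have hNK : ∀ i j, Kf i j ≤ N j := by
    intro i j
    have h1 : Kf i j ≤ Finset.univ.sup (fun j' => Kf j' j) :=
      Finset.le_sup (f := fun j' => Kf j' j) (Finset.mem_univ i)
    simp only [hN]
    omega
  refine CCCOrth.Frame.orthant (X := X) (n := n)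
    { γ := γ
      hγ := hγ
      N := N
      hdisj := ?_
      hcross := ?_ }
  · intro i j m k hij hm
    exact (hA i j m (le_trans (hNA i j) hm) hij).2.1 k
  · intro i j m k hij hm hk
    exact hMK i j m k (le_trans (hNM i j) hm) (le_trans (hNK i j) hk) hij
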